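/- For the cyclic shift operator τ on (ℂ²)^{⊗Q} with Q ≥ 2, and for every eigenvalue ω ≠ 1 of τ, we have dim Eig(1) ≥ dim Eig(ω) + 2. -/

import Mathlib

open Function Module

/-- The translation (cyclic shift) operator on the `Q`-qubit state space. -/
noncomputable def translationOp (Q : ℕ) :
    Module.End ℂ ((Fin Q → Fin 2) → ℂ) :=
  LinearMap.funLeft ℂ ℂ (fun s => s ∘ finRotate Q)

/-- The underlying permutation of basis states. -/
def gP (Q : ℕ) : Equiv.Perm (Fin Q → Fin 2) :=
  Equiv.arrowCongr (finRotate Q).symm (Equiv.refl (Fin 2))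

lemma gP_apply (Q : ℕ) (s : Fin Q → Fin 2) : gP Q s = s ∘ finRotate Q := rfl

lemma translationOp_apply (Q : ℕ) (v : (Fin Q → Fin 2) → ℂ) (s : Fin Q → Fin 2) :
    translationOp Q v s = v (gP Q s) := rfl

noncomputable def orbSetoid (Q : ℕ) : Setoid (Fin Q → Fin 2) :=
  MulAction.orbitRel (Subgroup.zpowers (gP Q)) (Fin Q → Fin 2)

noncomputable def repF (Q : ℕ) (s : Fin Q → Fin 2) : Fin Q → Fin 2 :=
  (Quotient.mk (orbSetoid Q) s).out

lemma repF_exists (Q : ℕ) (s : Fin Q → Fin 2) : ∃ k : ℕ, (⇑(gP Q))^[k] (repF Q s) = s := by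
  have hrel : (orbSetoid Q).r (repF Q s) s := by
    apply Quotient.exact (s := orbSetoid Q)
    exact Quotient.out_eq _
  have hmem : repF Q s ∈ MulAction.orbit (Subgroup.zpowers (gP Q)) s := hrel
  obtain ⟨⟨u, hu⟩, hact⟩ := hmem
  obtain ⟨i, rfl⟩ := hu
  have hrep : (gP Q ^ i) s = repF Q s := hact
  have hs : (gP Q ^ (-i)) (repF Q s) = s := by
    rw [← hrep, ← Equiv.Perm.mul_apply, ← zpow_add, neg_add_cancel, zpow_zero,
      Equiv.Perm.one_apply]
  have hord : IsOfFinOrder (gP Q) := isOfFinOrder_of_finite _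
  set j : ℕ := ((-i) % (orderOf (gP Q) : ℤ)).toNat with hj
  refine ⟨j, ?_⟩
  have hnn : (0 : ℤ) ≤ (-i) % (orderOf (gP Q) : ℤ) :=
    Int.emod_nonneg _ (by exact_mod_cast hord.orderOf_pos.ne')
  have : gP Q ^ (j : ℤ) = gP Q ^ (-i) := by
    rw [hj, Int.toNat_of_nonneg hnn]
    exact zpow_mod_orderOf _ _
  have h2 : (gP Q ^ j) (repF Q s) = s := by
    rw [← zpow_natCast, this]; exact hs
  exact h2

lemma repF_g (Q : ℕ) (s : Fin Q → Fin 2) : repF Q (gP Q s) = repF Q s := by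
  unfold repF
  congr 1
  apply Quotient.sound (s := orbSetoid Q)
  exact ⟨⟨gP Q, Subgroup.mem_zpowers _⟩, rfl⟩

noncomputable def kF (Q : ℕ) (s : Fin Q → Fin 2) : ℕ := Nat.find (repF_exists Q s)

lemma kF_spec (Q : ℕ) (s : Fin Q → Fin 2) : (⇑(gP Q))^[kF Q s] (repF Q s) = s :=
  Nat.find_spec (repF_exists Q s)

lemma kF_g_le (Q : ℕ) (s : Fin Q → Fin 2) : kF Q (gP Q s) ≤ kF Q s + 1 := by
  apply Nat.find_min'
  rw [repF_g, iterate_succ_apply', kF_spec]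

lemma period_dvd (Q : ℕ) (x : Fin Q → Fin 2) (a b : ℕ) (hab : a ≤ b)
    (h : (⇑(gP Q))^[a] x = (⇑(gP Q))^[b] x) : minimalPeriod (⇑(gP Q)) x ∣ b - a := by
  have hb : b = a + (b - a) := by omega
  have h2 : (⇑(gP Q))^[a] x = (⇑(gP Q))^[a] ((⇑(gP Q))^[b - a] x) := by
    conv_lhs => rw [h, hb]
    rw [iterate_add_apply]
  have hinj : Function.Injective ((⇑(gP Q))^[a]) := (gP Q).injective.iterate a
  have h3 : (⇑(gP Q))^[b - a] x = x := (hinj h2).symm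
  exact Function.IsPeriodicPt.minimalPeriod_dvd h3

lemma wrap_pow (Q : ℕ) (ω : ℂ) (s : Fin Q → Fin 2)
    (hp : ω ^ minimalPeriod (⇑(gP Q)) (repF Q s) = 1) :
    ω ^ (kF Q s + 1) = ω ^ kF Q (gP Q s) := by
  have e1 : (⇑(gP Q))^[kF Q (gP Q s)] (repF Q s) = gP Q s := by
    rw [← repF_g]; exact kF_spec Q (gP Q s)
  have e2 : (⇑(gP Q))^[kF Q s + 1] (repF Q s) = gP Q s := by
    rw [iterate_succ_apply', kF_spec]
  have hle := kF_g_le Q s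
  have hdvd := period_dvd Q (repF Q s) (kF Q (gP Q s)) (kF Q s + 1) hle (e1.trans e2.symm)
  obtain ⟨m, hm⟩ := hdvd
  have : kF Q s + 1 = kF Q (gP Q s) + minimalPeriod (⇑(gP Q)) (repF Q s) * m := by omega
  rw [this, pow_add, pow_mul, hp, one_pow, mul_one]

lemma iter_eigen (Q : ℕ) (ω : ℂ) (v : (Fin Q → Fin 2) → ℂ)
    (hv : ∀ s, v (gP Q s) = ω * v s) (m : ℕ) (s : Fin Q → Fin 2) :
    v ((⇑(gP Q))^[m] s) = ω ^ m * v s := by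
  induction m with
  | zero => simp
  | succ n ih => rw [iterate_succ_apply', hv, ih, pow_succ]; ring

lemma vanish (Q : ℕ) (ω : ℂ) (v : (Fin Q → Fin 2) → ℂ)
    (hv : ∀ s, v (gP Q s) = ω * v s) (s : Fin Q → Fin 2)
    (hp : ω ^ minimalPeriod (⇑(gP Q)) (repF Q s) ≠ 1) : v s = 0 := by
  have hrep : v (repF Q s) = 0 := by
    have h1 : (⇑(gP Q))^[minimalPeriod (⇑(gP Q)) (repF Q s)] (repF Q s) = repF Q s :=
      isPeriodicPt_minimalPeriod _ _
    have h2 := iter_eigen Q ω v hv (minimalPeriod (⇑(gP Q)) (repF Q s)) (repF Q s)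
    rw [h1] at h2
    have : (ω ^ minimalPeriod (⇑(gP Q)) (repF Q s) - 1) * v (repF Q s) = 0 := by
      rw [sub_mul, one_mul, ← h2, sub_self]
    rcases mul_eq_zero.1 this with h | h
    · exact absurd (by linear_combination h) hp
    · exact h
  have := iter_eigen Q ω v hv (kF Q s) (repF Q s)
  rw [kF_spec, hrep, mul_zero] at this
  exact this

/-- For the cyclic shift operator `τ` on `(ℂ²)^{⊗Q}` with `Q ≥ 2` and every
eigenvalue `ω ≠ 1` of `τ`, we have `dim Eig(1) ≥ dim Eig(ω) + 2`. -/
theorem finrank_eigenspace_one_ge (Q : ℕ) (hQ : 2 ≤ Q) (ω : ℂ) (hω : ω ≠ 1)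
    (h : Module.End.HasEigenvalue (translationOp Q) ω) :
    Module.finrank ℂ (Module.End.eigenspace (translationOp Q) ω) + 2
      ≤ Module.finrank ℂ (Module.End.eigenspace (translationOp Q) 1) := by
  classical
  set τ := translationOp Q with hτ
  have hmem : ∀ (μ : ℂ) (v : (Fin Q → Fin 2) → ℂ),
      v ∈ Module.End.eigenspace τ μ ↔ ∀ s, v (gP Q s) = μ * v s := by
    intro μ v
    rw [Module.End.mem_eigenspace_iff]
    constructor
    · intro hv s
      have := congrFun hv s
      simpa [hτ, translationOp_apply] using this
    · intro hv
      funext s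
      simpa [hτ, translationOp_apply] using hv s
  -- ω ≠ 0
  obtain ⟨v₀, hv₀⟩ := h.exists_hasEigenvector
  have hω0 : ω ≠ 0 := by
    intro h0
    apply hv₀.2
    have hv0 := (hmem ω v₀).1 hv₀.1
    funext s
    have : v₀ (gP Q ((gP Q).symm s)) = ω * v₀ ((gP Q).symm s) := hv0 _
    rw [Equiv.apply_symm_apply, h0, zero_mul] at this
    exact this
  let c : (Fin Q → Fin 2) → ℂ := fun s => ω⁻¹ ^ kF Q s
  have hc : ∀ s, c s ≠ 0 := fun s => pow_ne_zero _ (inv_ne_zero hω0)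
  -- key invariance
  have key : ∀ v : (Fin Q → Fin 2) → ℂ, (∀ s, v (gP Q s) = ω * v s) →
      ∀ s : Fin Q → Fin 2, v (gP Q s) * c (gP Q s) = v s * c s := by
    intro v hv s
    by_cases hp : ω ^ minimalPeriod (⇑(gP Q)) (repF Q s) = 1
    · have hw := wrap_pow Q ω s hp
      have hw' : ω⁻¹ ^ (kF Q s + 1) = ω⁻¹ ^ kF Q (gP Q s) := by
        rw [inv_pow, inv_pow, hw]
      show v (gP Q s) * ω⁻¹ ^ kF Q (gP Q s) = v s * ω⁻¹ ^ kF Q s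
      rw [hv s, ← hw', pow_succ]
      have : ω * ω⁻¹ = 1 := mul_inv_cancel₀ hω0
      calc ω * v s * (ω⁻¹ ^ kF Q s * ω⁻¹) = v s * ω⁻¹ ^ kF Q s * (ω * ω⁻¹) := by ring
        _ = v s * ω⁻¹ ^ kF Q s := by rw [this, mul_one]
    · have h1 := vanish Q ω v hv s hp
      have h2 : v (gP Q s) = 0 := by rw [hv s, h1, mul_zero]
      rw [h1, h2, zero_mul, zero_mul]
  -- multiplication by c as a linear map
  let mulC : ((Fin Q → Fin 2) → ℂ) →ₗ[ℂ] ((Fin Q → Fin 2) → ℂ) :=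
    { toFun := fun v s => v s * c s
      map_add' := by intro x y; funext s; simp [add_mul]
      map_smul' := by intro a x; funext s; simp [smul_eq_mul]; ring }
  have hmul : ∀ v ∈ Module.End.eigenspace τ ω, mulC v ∈ Module.End.eigenspace τ 1 := by
    intro v hv
    rw [hmem]
    intro s
    rw [one_mul]
    exact key v ((hmem ω v).1 hv) s
  let φ : (Module.End.eigenspace τ ω) →ₗ[ℂ] (Module.End.eigenspace τ 1) :=
    LinearMap.codRestrict _ (mulC ∘ₗ (Module.End.eigenspace τ ω).subtype)
      (fun v => hmul _ v.2)
  have hinj : Function.Injective φ := by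
    intro x y hxy
    ext s
    have := congrFun (congrArg Subtype.val hxy) s
    exact mul_right_cancel₀ (hc s) this
  -- the two constant strings
  let z0 : Fin Q → Fin 2 := fun _ => 0
  let z1 : Fin Q → Fin 2 := fun _ => 1
  have hz : z0 ≠ z1 := by
    intro hcontra
    have := congrFun hcontra ⟨0, by omega⟩
    simp [z0, z1] at this
  have gz0 : gP Q z0 = z0 := rfl
  have gz1 : gP Q z1 = z1 := rfl
  let χ0 : (Fin Q → Fin 2) → ℂ := Pi.single z0 1
  let χ1 : (Fin Q → Fin 2) → ℂ := Pi.single z1 1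
  have hfix : ∀ z : Fin Q → Fin 2, gP Q z = z → (Pi.single z 1 : _ → ℂ) ∈
      Module.End.eigenspace τ 1 := by
    intro z hzf
    rw [hmem]
    intro s
    rw [one_mul, Pi.single_apply, Pi.single_apply]
    have : gP Q s = z ↔ s = z := by
      constructor
      · intro hh; exact (gP Q).injective (by rw [hh, hzf])
      · intro hh; rw [hh, hzf]
    simp only [this]
  have hχ0 : χ0 ∈ Module.End.eigenspace τ 1 := hfix z0 gz0
  have hχ1 : χ1 ∈ Module.End.eigenspace τ 1 := hfix z1 gz1
  -- evaluation map
  let ψ : (Module.End.eigenspace τ 1) →ₗ[ℂ] (ℂ × ℂ) :=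
    LinearMap.prod
      ((LinearMap.proj z0 : ((Fin Q → Fin 2) → ℂ) →ₗ[ℂ] ℂ) ∘ₗ (Module.End.eigenspace τ 1).subtype)
      ((LinearMap.proj z1 : ((Fin Q → Fin 2) → ℂ) →ₗ[ℂ] ℂ) ∘ₗ (Module.End.eigenspace τ 1).subtype)
  have hsurj : Function.Surjective ψ := by
    rintro ⟨a, b⟩
    refine ⟨a • ⟨χ0, hχ0⟩ + b • ⟨χ1, hχ1⟩, ?_⟩
    have e00 : χ0 z0 = 1 := Pi.single_eq_same z0 1
    have e01 : χ0 z1 = 0 := Pi.single_eq_of_ne (Ne.symm hz) 1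
    have e10 : χ1 z0 = 0 := Pi.single_eq_of_ne hz 1
    have e11 : χ1 z1 = 1 := Pi.single_eq_same z1 1
    simp only [ψ, LinearMap.prod_apply, LinearMap.comp_apply, Pi.prod]
    simp [e00, e01, e10, e11]
  -- vanishing of eigenvectors for ω at fixed points
  have hvanish : ∀ v ∈ Module.End.eigenspace τ ω, ∀ z : Fin Q → Fin 2, gP Q z = z →
      v z = 0 := by
    intro v hv z hzf
    have := (hmem ω v).1 hv z
    rw [hzf] at this
    have h2 : (1 - ω) * v z = 0 := by linear_combination this
    rcases mul_eq_zero.1 h2 with hh | hh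
    · exact absurd (by linear_combination -hh) hω
    · exact hh
  have hrange : LinearMap.range φ ≤ LinearMap.ker ψ := by
    rintro x ⟨v, rfl⟩
    rw [LinearMap.mem_ker]
    have h0 : (v : (Fin Q → Fin 2) → ℂ) z0 = 0 := hvanish v v.2 z0 gz0
    have h1 : (v : (Fin Q → Fin 2) → ℂ) z1 = 0 := hvanish v v.2 z1 gz1
    have e0 : ((φ v : Module.End.eigenspace τ 1) : (Fin Q → Fin 2) → ℂ) z0 = 0 := by
      show (v : (Fin Q → Fin 2) → ℂ) z0 * c z0 = 0
      rw [h0, zero_mul]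
    have e1 : ((φ v : Module.End.eigenspace τ 1) : (Fin Q → Fin 2) → ℂ) z1 = 0 := by
      show (v : (Fin Q → Fin 2) → ℂ) z1 * c z1 = 0
      rw [h1, zero_mul]
    exact Prod.ext e0 e1
  -- dimension count
  have h1 : Module.finrank ℂ (Module.End.eigenspace τ ω)
      = Module.finrank ℂ (LinearMap.range φ) := (LinearMap.finrank_range_of_inj hinj).symm
  have h2 : Module.finrank ℂ (LinearMap.range φ) ≤ Module.finrank ℂ (LinearMap.ker ψ) :=
    Submodule.finrank_mono hrange
  have h3 := LinearMap.finrank_range_add_finrank_ker ψ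
  have h4 : Module.finrank ℂ (LinearMap.range ψ) = 2 := by
    rw [LinearMap.range_eq_top.2 hsurj, finrank_top]
    simp [Module.finrank_prod]
  omega
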